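/- Fix an integer s ≥ 1 and a function c : ℝ → ℝ. Let α : ℤ × ℝ → ℝ be positive and differentiable in t, satisfying the linear equation ∂_t α(n) = (−1)^{s+1} α(n − s) − c(t) α(n) for all n ∈ ℤ. Then v(n) = α(n)/α(n+1) satisfies the s-th differential-difference Burgers flow ∂_t ln v(n) = (−1)^s [ ∏_{j=1}^{s} v(n + 1 − j) − ∏_{j=1}^{s} v(n − j) ] for all n ∈ ℤ. -/

import Mathlib

lemma telescope_prod (α : ℤ → ℝ → ℝ) (hα : ∀ n t, 0 < α n t) (t : ℝ) :
    ∀ (s : ℕ) (m : ℤ), ∏ j ∈ Finset.Icc 1 s, (α (m - (j : ℤ)) t / α (m - (j : ℤ) + 1) t)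
      = α (m - (s : ℤ)) t / α m t := by
  intro s
  induction s with
  | zero => intro m; simp [div_self (hα m t).ne']
  | succ k ih =>
    intro m
    rw [Finset.prod_Icc_succ_top (Nat.le_add_left 1 k), ih m]
    have h1 : (0:ℝ) < α (m - (k:ℤ)) t := hα _ t
    have h2 : (0:ℝ) < α m t := hα _ t
    have h3 : m - ((k:ℤ)+1) + 1 = m - (k:ℤ) := by ring
    push_cast
    rw [h3]
    field_simp

/-- The discrete Cole-Hopf transformation `v(n) = α(n)/α(n+1)` linearizes the
first differential-difference Burgers hierarchy. -/
theorem cole_hopf_burgers_one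
    (s : ℕ) (hs : 1 ≤ s) (c : ℝ → ℝ) (α : ℤ → ℝ → ℝ)
    (hα : ∀ n t, 0 < α n t)
    (hlin : ∀ n t, HasDerivAt (α n)
      ((-1 : ℝ) ^ (s + 1) * α (n - (s : ℤ)) t - c t * α n t) t) :
    let v : ℤ → ℝ → ℝ := fun n t => α n t / α (n + 1) t
    ∀ n t, HasDerivAt (fun y => Real.log (v n y))
      ((-1 : ℝ) ^ s * (∏ j ∈ Finset.Icc 1 s, v (n + 1 - (j : ℤ)) t
        - ∏ j ∈ Finset.Icc 1 s, v (n - (j : ℤ)) t)) t := by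
  intro v n t
  have hfun : (fun y => Real.log (v n y))
      = fun y => Real.log (α n y) - Real.log (α (n + 1) y) := by
    funext y
    exact Real.log_div (hα n y).ne' (hα (n+1) y).ne'
  have h1 : HasDerivAt (fun y => Real.log (α n y))
      (((-1 : ℝ) ^ (s + 1) * α (n - (s : ℤ)) t - c t * α n t) / α n t) t :=
    (hlin n t).log (hα n t).ne'
  have h2 : HasDerivAt (fun y => Real.log (α (n+1) y))
      (((-1 : ℝ) ^ (s + 1) * α (n + 1 - (s : ℤ)) t - c t * α (n+1) t) / α (n+1) t) t :=
    (hlin (n+1) t).log (hα (n+1) t).ne'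
  have hsub := h1.sub h2
  rw [hfun]
  refine HasDerivAt.congr_deriv hsub ?_
  have hp1 : ∏ j ∈ Finset.Icc 1 s, v (n + 1 - (j : ℤ)) t
      = α (n + 1 - (s:ℤ)) t / α (n+1) t := by
    rw [← telescope_prod α hα t s (n+1)]
  have hp2 : ∏ j ∈ Finset.Icc 1 s, v (n - (j : ℤ)) t
      = α (n - (s:ℤ)) t / α n t := by
    rw [← telescope_prod α hα t s n]
  rw [hp1, hp2]
  have e1 : (0:ℝ) < α n t := hα n t
  have e2 : (0:ℝ) < α (n+1) t := hα (n+1) t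
  have hpow : (-1 : ℝ) ^ (s + 1) = -(-1:ℝ)^s := by rw [pow_succ]; ring
  rw [hpow]
  field_simp
  ring
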